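/- Let z_1,…,z_r ∈ ℤ^d be generating vectors and n_1,…,n_r ≥ 1 integer moduli, let (h_ξ)_{ξ ∈ ℤ_{n_1}×⋯×ℤ_{n_r}} be a minimal anti-aliasing family with image A = { h_ξ }, and let û : ℤ^d → ℂ satisfy Σ_{h ∈ ℤ^d} ‖h‖₂² |û(h)| < ∞. Then ( Σ_{ξ} | Σ_{ℓ ∈ Λ^⊥, ℓ ≠ 0} (‖h_ξ + ℓ‖₂² − ‖h_ξ‖₂²) · û(h_ξ + ℓ) |² )^{1/2} ≤ Σ_{h ∈ ℤ^d∖A} ‖h‖₂² |û(h)|. (This bounds the L₂ norm of the defect, the commutator of the lattice interpolation operator with the Laplacian, applied to the function with Fourier coefficients û.) -/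
import Mathlib


set_option maxHeartbeats 1000000
noncomputable section

/-- Integer dot product on `ℤ^d`. -/
def dotZ {d : ℕ} (h z : Fin d → ℤ) : ℤ := ∑ i, h i * z i

/-- Membership in the dual lattice `Λ^⊥`. -/
def InDual {d r : ℕ} (z : Fin r → Fin d → ℤ) (n : Fin r → ℕ) (h : Fin d → ℤ) : Prop :=
  ∀ j, (n j : ℤ) ∣ dotZ h (z j)

/-- The squared Euclidean norm `‖h‖₂² = Σ_j h_j²` of `h ∈ ℤ^d`. -/
def normSq {d : ℕ} (h : Fin d → ℤ) : ℝ := ∑ j, (h j : ℝ) ^ 2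

lemma dotZ_add {d : ℕ} (a b z : Fin d → ℤ) : dotZ (a + b) z = dotZ a z + dotZ b z := by
  simp [dotZ, add_mul, Finset.sum_add_distrib]

lemma normSq_nonneg {d : ℕ} (h : Fin d → ℤ) : 0 ≤ normSq h :=
  Finset.sum_nonneg fun _ _ => sq_nonneg _

/-- **Defect bound.** For a minimal anti-aliasing family `(h_ξ)` with image `A`
and coefficients `û` with `Σ_h ‖h‖₂²|û(h)| < ∞`,
`(Σ_ξ |Σ_{0 ≠ ℓ ∈ Λ^⊥} (‖h_ξ+ℓ‖₂² − ‖h_ξ‖₂²) û(h_ξ+ℓ)|²)^{1/2}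
  ≤ Σ_{h ∉ A} ‖h‖₂² |û(h)|`. -/
theorem defect_bound
    (d r : ℕ) (hr : 1 ≤ r)
    (z : Fin r → Fin d → ℤ) (n : Fin r → ℕ) (hn : ∀ j, 1 ≤ n j)
    (hfam : ((j : Fin r) → Fin (n j)) → Fin d → ℤ)
    (hcong : ∀ ξ j, ((dotZ (hfam ξ) (z j) : ZMod (n j))) = ((ξ j : ℕ) : ZMod (n j)))
    (hmin : ∀ ξ (h : Fin d → ℤ),
      (∀ j, ((dotZ h (z j) : ZMod (n j))) = ((ξ j : ℕ) : ZMod (n j))) →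
      normSq (hfam ξ) ≤ normSq h)
    (uhat : (Fin d → ℤ) → ℂ)
    (hu : Summable fun m : Fin d → ℤ => normSq m * ‖uhat m‖) :
    Real.sqrt (∑ ξ : (j : Fin r) → Fin (n j),
        ‖∑' ℓ : {ℓ : Fin d → ℤ // ℓ ≠ 0 ∧ InDual z n ℓ},
            ((normSq (hfam ξ + ℓ.1) - normSq (hfam ξ) : ℝ) : ℂ) * uhat (hfam ξ + ℓ.1)‖ ^ 2)
      ≤ ∑' h : {h : Fin d → ℤ // h ∉ Set.range hfam}, normSq h.1 * ‖uhat h.1‖ := by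
  classical
  haveI hNZ : ∀ j, NeZero (n j) := fun j => ⟨Nat.one_le_iff_ne_zero.mp (hn j)⟩
  set f : (Fin d → ℤ) → ℝ := fun m => normSq m * ‖uhat m‖ with hfdef
  have hf0 : ∀ m, 0 ≤ f m := fun m => mul_nonneg (normSq_nonneg m) (norm_nonneg _)
  have hshift : ∀ ξ (ℓ : Fin d → ℤ), InDual z n ℓ → ∀ j,
      ((dotZ (hfam ξ + ℓ) (z j) : ZMod (n j))) = ((ξ j : ℕ) : ZMod (n j)) := by
    intro ξ ℓ hℓ j
    rw [dotZ_add]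
    push_cast
    rw [(ZMod.intCast_zmod_eq_zero_iff_dvd _ _).mpr (hℓ j), add_zero]
    exact_mod_cast hcong ξ j
  have hxieq : ∀ (ξ ξ' : (j : Fin r) → Fin (n j)),
      (∀ j, ((ξ j : ℕ) : ZMod (n j)) = ((ξ' j : ℕ) : ZMod (n j))) → ξ = ξ' := by
    intro ξ ξ' h
    funext j
    have hv := congrArg ZMod.val (h j)
    rw [ZMod.val_cast_of_lt (ξ j).2, ZMod.val_cast_of_lt (ξ' j).2] at hv
    exact Fin.ext hv
  set e : ((j : Fin r) → Fin (n j)) × {ℓ : Fin d → ℤ // ℓ ≠ 0 ∧ InDual z n ℓ} →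
      (Fin d → ℤ) := fun p => hfam p.1 + p.2.1 with hedef
  have he : Function.Injective e := by
    rintro ⟨ξ, ℓ, hℓ0, hℓ⟩ ⟨ξ', ℓ', hℓ0', hℓ'⟩ h
    simp only [hedef] at h
    have hξ : ξ = ξ' := by
      refine hxieq _ _ fun j => ?_
      rw [← hshift ξ ℓ hℓ j, ← hshift ξ' ℓ' hℓ' j, h]
    subst hξ
    have : ℓ = ℓ' := add_left_cancel h
    simp [this]
  have hnr : ∀ ξ (ℓ : {ℓ : Fin d → ℤ // ℓ ≠ 0 ∧ InDual z n ℓ}),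
      hfam ξ + ℓ.1 ∉ Set.range hfam := by
    rintro ξ ⟨ℓ, hℓ0, hℓ⟩ ⟨ξ', hξ'⟩
    have hxe : ξ' = ξ := by
      refine hxieq _ _ fun j => ?_
      rw [← hcong ξ' j, hξ', hshift ξ ℓ hℓ j]
    rw [hxe] at hξ'
    exact hℓ0 (by simpa using (left_eq_add.mp hξ'))
  have hFe : Summable (f ∘ e) := hu.comp_injective he
  have hS : Summable (fun h : {h : Fin d → ℤ // h ∉ Set.range hfam} => f h.1) :=
    hu.subtype _
  have hGξ : ∀ ξ, Summable (fun ℓ : {ℓ : Fin d → ℤ // ℓ ≠ 0 ∧ InDual z n ℓ} =>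
      f (hfam ξ + ℓ.1)) := by
    intro ξ
    have hi : Function.Injective
        (fun ℓ : {ℓ : Fin d → ℤ // ℓ ≠ 0 ∧ InDual z n ℓ} => hfam ξ + ℓ.1) := by
      intro a b hab
      exact Subtype.ext (add_left_cancel hab)
    exact hu.comp_injective hi
  set T : ((j : Fin r) → Fin (n j)) → {ℓ : Fin d → ℤ // ℓ ≠ 0 ∧ InDual z n ℓ} → ℂ :=
    fun ξ ℓ =>
      ((normSq (hfam ξ + ℓ.1) - normSq (hfam ξ) : ℝ) : ℂ) * uhat (hfam ξ + ℓ.1) with hT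
  have hterm : ∀ ξ (ℓ : {ℓ : Fin d → ℤ // ℓ ≠ 0 ∧ InDual z n ℓ}),
      ‖T ξ ℓ‖ ≤ f (hfam ξ + ℓ.1) := by
    intro ξ ℓ
    have hmono : normSq (hfam ξ) ≤ normSq (hfam ξ + ℓ.1) :=
      hmin ξ _ (hshift ξ ℓ.1 ℓ.2.2)
    have hnrm : ‖T ξ ℓ‖
        = |normSq (hfam ξ + ℓ.1) - normSq (hfam ξ)| * ‖uhat (hfam ξ + ℓ.1)‖ := by
      rw [hT, norm_mul, Complex.norm_real, Real.norm_eq_abs]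
    rw [hnrm, abs_of_nonneg (by linarith)]
    exact mul_le_mul_of_nonneg_right (by linarith [normSq_nonneg (hfam ξ)]) (norm_nonneg _)
  have hTle : ∀ ξ, ‖∑' ℓ : {ℓ : Fin d → ℤ // ℓ ≠ 0 ∧ InDual z n ℓ}, T ξ ℓ‖
      ≤ ∑' ℓ : {ℓ : Fin d → ℤ // ℓ ≠ 0 ∧ InDual z n ℓ}, f (hfam ξ + ℓ.1) := by
    intro ξ
    have hs : Summable (fun ℓ : {ℓ : Fin d → ℤ // ℓ ≠ 0 ∧ InDual z n ℓ} => ‖T ξ ℓ‖) :=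
      Summable.of_nonneg_of_le (fun _ => norm_nonneg _) (hterm ξ) (hGξ ξ)
    exact le_trans (norm_tsum_le_tsum_norm hs)
      (Summable.tsum_le_tsum (f := fun ℓ : {ℓ : Fin d → ℤ // ℓ ≠ 0 ∧ InDual z n ℓ} => ‖T ξ ℓ‖)
        (g := fun ℓ : {ℓ : Fin d → ℤ // ℓ ≠ 0 ∧ InDual z n ℓ} => f (hfam ξ + ℓ.1))
        (hterm ξ) hs (hGξ ξ))
  have h1 : Real.sqrt (∑ ξ, ‖∑' ℓ : {ℓ : Fin d → ℤ // ℓ ≠ 0 ∧ InDual z n ℓ}, T ξ ℓ‖ ^ 2) ≤ ∑ ξ, ‖∑' ℓ : {ℓ : Fin d → ℤ // ℓ ≠ 0 ∧ InDual z n ℓ}, T ξ ℓ‖ := by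
    have hnn : ∀ ξ ∈ Finset.univ, (0:ℝ) ≤ ‖∑' ℓ : {ℓ : Fin d → ℤ // ℓ ≠ 0 ∧ InDual z n ℓ}, T ξ ℓ‖ := fun _ _ => norm_nonneg _
    calc Real.sqrt (∑ ξ, ‖∑' ℓ : {ℓ : Fin d → ℤ // ℓ ≠ 0 ∧ InDual z n ℓ}, T ξ ℓ‖ ^ 2)
        ≤ Real.sqrt ((∑ ξ, ‖∑' ℓ : {ℓ : Fin d → ℤ // ℓ ≠ 0 ∧ InDual z n ℓ}, T ξ ℓ‖) ^ 2) :=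
          Real.sqrt_le_sqrt (Finset.sum_sq_le_sq_sum_of_nonneg hnn)
      _ = ∑ ξ, ‖∑' ℓ : {ℓ : Fin d → ℤ // ℓ ≠ 0 ∧ InDual z n ℓ}, T ξ ℓ‖ := Real.sqrt_sq (Finset.sum_nonneg hnn)
  have h2 : ∑ ξ, ‖∑' ℓ : {ℓ : Fin d → ℤ // ℓ ≠ 0 ∧ InDual z n ℓ}, T ξ ℓ‖ ≤ ∑ ξ, ∑' ℓ : {ℓ : Fin d → ℤ // ℓ ≠ 0 ∧ InDual z n ℓ}, f (hfam ξ + ℓ.1) :=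
    Finset.sum_le_sum fun ξ _ => hTle ξ
  have h3 : ∑ ξ, ∑' ℓ : {ℓ : Fin d → ℤ // ℓ ≠ 0 ∧ InDual z n ℓ}, f (hfam ξ + ℓ.1)
      = ∑' p : ((j : Fin r) → Fin (n j)) × {ℓ : Fin d → ℤ // ℓ ≠ 0 ∧ InDual z n ℓ}, (f ∘ e) p := by
    rw [Summable.tsum_prod' hFe (fun ξ => hGξ ξ), tsum_fintype]
    rfl
  have h4 : ∑' p : ((j : Fin r) → Fin (n j)) × {ℓ : Fin d → ℤ // ℓ ≠ 0 ∧ InDual z n ℓ}, (f ∘ e) p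
      ≤ ∑' h : {h : Fin d → ℤ // h ∉ Set.range hfam}, f h.1 := by
    refine Summable.tsum_le_tsum_of_inj (fun p => (⟨e p, hnr p.1 p.2⟩ :
        {h : Fin d → ℤ // h ∉ Set.range hfam})) ?_ (fun c _ => hf0 c.1)
      (fun p => le_refl _) hFe hS
    intro a b hab
    exact he (congrArg Subtype.val hab)
  calc Real.sqrt (∑ ξ, ‖∑' ℓ : {ℓ : Fin d → ℤ // ℓ ≠ 0 ∧ InDual z n ℓ}, T ξ ℓ‖ ^ 2)
      ≤ ∑ ξ, ‖∑' ℓ : {ℓ : Fin d → ℤ // ℓ ≠ 0 ∧ InDual z n ℓ}, T ξ ℓ‖ := h1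
    _ ≤ ∑ ξ, ∑' ℓ : {ℓ : Fin d → ℤ // ℓ ≠ 0 ∧ InDual z n ℓ}, f (hfam ξ + ℓ.1) := h2
    _ = ∑' p : ((j : Fin r) → Fin (n j)) × {ℓ : Fin d → ℤ // ℓ ≠ 0 ∧ InDual z n ℓ}, (f ∘ e) p := h3
    _ ≤ _ := h4

end
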